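/- Under the standard embeddings of ℍ into M₂(ℂ) (via q = a + bi + cj + dk ↦ [[a+bi, c+di],[−c+di, a−bi]]) and of M₂(ℝ) into M₂(ℂ), the intersection of the images of ℍ and M₂(ℝ) inside M₂(ℂ) is isomorphic to ℂ as an ℝ-algebra. -/

import Mathlib

noncomputable def myJ : Matrix (Fin 2) (Fin 2) ℂ := !![0, 1; -1, 0]

lemma myJ_sq : myJ * myJ = -1 := by
  simp [myJ, Matrix.mul_fin_two]
  ext i j
  fin_cases i <;> fin_cases j <;> simp [Matrix.one_apply]

noncomputable def myphi : ℂ →ₐ[ℝ] Matrix (Fin 2) (Fin 2) ℂ :=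
  Complex.liftAux myJ myJ_sq

lemma myphi_apply (z : ℂ) : myphi z = !![(z.re : ℂ), z.im; -z.im, z.re] := by
  rw [myphi, Complex.liftAux_apply]
  ext i j
  fin_cases i <;> fin_cases j <;>
    simp [myJ, Matrix.algebraMap_matrix_apply, Matrix.one_apply, Algebra.algebraMap_eq_smul_one,
      Complex.real_smul]

open Quaternion in
/-- Under the standard embeddings ℍ ↪ M₂(ℂ), q = a+bi+cj+dk ↦ [[a+bi, c+di],[−c+di, a−bi]],
and M₂(ℝ) ↪ M₂(ℂ) (entrywise), the intersection of the two images is an ℝ-subalgebra of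
M₂(ℂ) isomorphic to ℂ. -/
theorem stmt7
    (f : Quaternion ℝ → Matrix (Fin 2) (Fin 2) ℂ)
    (hf : ∀ q : Quaternion ℝ, f q =
      !![(q.re : ℂ) + q.imI * Complex.I, (q.imJ : ℂ) + q.imK * Complex.I;
         (-q.imJ : ℂ) + q.imK * Complex.I, (q.re : ℂ) - q.imI * Complex.I])
    (g : Matrix (Fin 2) (Fin 2) ℝ → Matrix (Fin 2) (Fin 2) ℂ)
    (hg : ∀ m, g m = m.map (fun a => (a : ℂ))) :
    ∃ S : Subalgebra ℝ (Matrix (Fin 2) (Fin 2) ℂ),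
      (S : Set (Matrix (Fin 2) (Fin 2) ℂ)) = Set.range f ∩ Set.range g ∧
      Nonempty (S ≃ₐ[ℝ] ℂ) := by
  refine ⟨myphi.range, ?_, ⟨(AlgEquiv.ofInjective myphi myphi.toRingHom.injective).symm⟩⟩
  ext x
  simp only [Subalgebra.coe_toSubsemiring, AlgHom.coe_range, Set.mem_range, Set.mem_inter_iff]
  constructor
  · rintro ⟨z, rfl⟩
    rw [myphi_apply]
    refine ⟨⟨⟨z.re, 0, z.im, 0⟩, ?_⟩, ⟨!![z.re, z.im; -z.im, z.re], ?_⟩⟩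
    · refine (hf _).trans ?_
      ext i j
      fin_cases i <;> fin_cases j <;> simp
    · rw [hg]
      ext i j
      fin_cases i <;> fin_cases j <;> simp
  · rintro ⟨⟨q, rfl⟩, m, hm⟩
    rw [hf q] at hm ⊢
    rw [hg] at hm
    have h00 : ((m 0 0 : ℝ) : ℂ).im = ((q.re : ℂ) + q.imI * Complex.I).im := by
      have := congrFun (congrFun hm 0) 0
      simp [Matrix.map_apply] at this
      rw [this]
    have h01 : ((m 0 1 : ℝ) : ℂ).im = ((q.imJ : ℂ) + q.imK * Complex.I).im := by
      have := congrFun (congrFun hm 0) 1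
      simp [Matrix.map_apply] at this
      rw [this]
    simp at h00 h01
    replace h00 := h00.symm
    replace h01 := h01.symm
    refine ⟨⟨q.re, q.imJ⟩, ?_⟩
    rw [myphi_apply]
    ext i j
    fin_cases i <;> fin_cases j <;> simp [h00, h01]
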